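/- Let (μ_{abc})_{0 ≤ a,b,c ≤ 2} be real numbers such that Σ_{a,b,c=0}^{2} μ_{abc} ω_a ω_b ω_c = 0 for every ω = (ω₀, ω₁, ω₂) ∈ ℝ³ with ω₀² − ω₁² − ω₂² = 1. Then the cubic form Σ_{a,b,c=0}^{2} μ_{abc} X_a X_b X_c vanishes identically on ℝ³; equivalently, for all 0 ≤ a, b, c ≤ 2 the symmetrized coefficients satisfy Σ_{σ} μ_{σ(a) σ(b) σ(c)} = 0, where σ ranges over the permutations of the three indices. -/

import Mathlib

private lemma fin3_mk_two (h : 2 < 3) : (⟨2, h⟩ : Fin 3) = 2 := rfl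

private lemma perm3_sum' (g : Fin 3 → Fin 3 → Fin 3 → ℝ) :
    ∑ σ : Equiv.Perm (Fin 3), g (σ 0) (σ 1) (σ 2) =
      g 0 1 2 + g 1 0 2 + g 2 1 0 + g 0 2 1 + g 2 0 1 + g 1 2 0 := by
  have huniv : (Finset.univ : Finset (Equiv.Perm (Fin 3))) =
      {1, Equiv.swap 0 1, Equiv.swap 0 2, Equiv.swap 1 2,
       Equiv.swap 0 1 * Equiv.swap 1 2, Equiv.swap 1 2 * Equiv.swap 0 1} := by decide
  rw [huniv, Finset.sum_insert (by decide), Finset.sum_insert (by decide),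
      Finset.sum_insert (by decide), Finset.sum_insert (by decide),
      Finset.sum_insert (by decide), Finset.sum_singleton]
  have e : ∀ (σ : Equiv.Perm (Fin 3)) (i j : Fin 3), σ i = j → σ i = j := fun _ _ _ h => h
  rw [e 1 0 0 (by decide), e 1 1 1 (by decide), e 1 2 2 (by decide),
      e (Equiv.swap 0 1) 0 1 (by decide), e (Equiv.swap 0 1) 1 0 (by decide), e (Equiv.swap 0 1) 2 2 (by decide),
      e (Equiv.swap 0 2) 0 2 (by decide), e (Equiv.swap 0 2) 1 1 (by decide), e (Equiv.swap 0 2) 2 0 (by decide),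
      e (Equiv.swap 1 2) 0 0 (by decide), e (Equiv.swap 1 2) 1 2 (by decide), e (Equiv.swap 1 2) 2 1 (by decide),
      e (Equiv.swap 0 1 * Equiv.swap 1 2) 0 1 (by decide), e (Equiv.swap 0 1 * Equiv.swap 1 2) 1 2 (by decide), e (Equiv.swap 0 1 * Equiv.swap 1 2) 2 0 (by decide),
      e (Equiv.swap 1 2 * Equiv.swap 0 1) 0 2 (by decide), e (Equiv.swap 1 2 * Equiv.swap 0 1) 1 0 (by decide), e (Equiv.swap 1 2 * Equiv.swap 0 1) 2 1 (by decide)]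
  ring

set_option maxHeartbeats 1000000 in
/-- if the cubic form `Σ_{a,b,c} μ_{abc} ω_a ω_b ω_c` vanishes on
the unit hyperboloid `ω₀² − ω₁² − ω₂² = 1`, then the cubic form vanishes
identically on `ℝ³`; equivalently, all symmetrized coefficients
`Σ_σ μ_{σ(a)σ(b)σ(c)}` (over permutations `σ` of the three index slots)
vanish. -/
theorem cubic_form_vanishing_on_hyperboloid (μ : Fin 3 → Fin 3 → Fin 3 → ℝ)
    (h : ∀ ω : Fin 3 → ℝ, (ω 0) ^ 2 - (ω 1) ^ 2 - (ω 2) ^ 2 = 1 →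
      ∑ a : Fin 3, ∑ b : Fin 3, ∑ c : Fin 3, μ a b c * ω a * ω b * ω c = 0) :
    (∀ X : Fin 3 → ℝ,
        ∑ a : Fin 3, ∑ b : Fin 3, ∑ c : Fin 3, μ a b c * X a * X b * X c = 0) ∧
      ∀ a b c : Fin 3,
        ∑ σ : Equiv.Perm (Fin 3),
          μ (![a, b, c] (σ 0)) (![a, b, c] (σ 1)) (![a, b, c] (σ 2)) = 0 := by
  have H0 := h ![1, 0, 0] (by norm_num [Matrix.cons_val_two])
  have H1 := h ![(5/4), (3/4), 0] (by norm_num [Matrix.cons_val_two])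
  have H2 := h ![(5/4), (-3/4), 0] (by norm_num [Matrix.cons_val_two])
  have H3 := h ![(5/3), (4/3), 0] (by norm_num [Matrix.cons_val_two])
  have H4 := h ![(5/3), (-4/3), 0] (by norm_num [Matrix.cons_val_two])
  have H5 := h ![(5/4), 0, (3/4)] (by norm_num [Matrix.cons_val_two])
  have H6 := h ![(5/4), 0, (-3/4)] (by norm_num [Matrix.cons_val_two])
  have H7 := h ![(5/3), 0, (4/3)] (by norm_num [Matrix.cons_val_two])
  have H8 := h ![(5/3), 0, (-4/3)] (by norm_num [Matrix.cons_val_two])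
  have H9 := h ![(3/2), 1, (1/2)] (by norm_num [Matrix.cons_val_two])
  have H10 := h ![(3/2), 1, (-1/2)] (by norm_num [Matrix.cons_val_two])
  have H11 := h ![(3/2), -1, (1/2)] (by norm_num [Matrix.cons_val_two])
  have H12 := h ![(3/2), -1, (-1/2)] (by norm_num [Matrix.cons_val_two])
  have H13 := h ![3, 2, 2] (by norm_num [Matrix.cons_val_two])
  simp only [Fin.sum_univ_three, Matrix.cons_val_zero, Matrix.cons_val_one,
    Matrix.head_cons, Matrix.cons_val_two, Matrix.tail_cons] at H0 H1 H2 H3 H4 H5 H6 H7 H8 H9 H10 H11 H12 H13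
  have t000 : μ 0 0 0 = 0 := by linear_combination (1 : ℝ) * H0
  have t001 : μ 0 0 1 + μ 0 1 0 + μ 1 0 0 = 0 := by linear_combination (-5/4 : ℝ) * H0 + (128/75 : ℝ) * H1 + (-128/525 : ℝ) * H2 + (-243/700 : ℝ) * H3
  have t002 : μ 0 0 2 + μ 0 2 0 + μ 2 0 0 = 0 := by linear_combination (5/4 : ℝ) * H0 + (128/525 : ℝ) * H5 + (-128/75 : ℝ) * H6 + (243/700 : ℝ) * H8
  have t011 : μ 0 1 1 + μ 1 0 1 + μ 1 1 0 = 0 := by linear_combination (-25/9 : ℝ) * H0 + (32/45 : ℝ) * H1 + (32/45 : ℝ) * H2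
  have t012 : μ 0 1 2 + μ 0 2 1 + μ 1 0 2 + μ 1 2 0 + μ 2 0 1 + μ 2 1 0 = 0 := by linear_combination (-22/9 : ℝ) * H0 + (64/45 : ℝ) * H1 + (64/45 : ℝ) * H2 + (16/45 : ℝ) * H5 + (16/45 : ℝ) * H6 + (-2/3 : ℝ) * H10 + (-2/3 : ℝ) * H11
  have t022 : μ 0 2 2 + μ 2 0 2 + μ 2 2 0 = 0 := by linear_combination (-25/9 : ℝ) * H0 + (32/45 : ℝ) * H5 + (32/45 : ℝ) * H6
  have t111 : μ 1 1 1 = 0 := by linear_combination (125/36 : ℝ) * H0 + (-32/9 : ℝ) * H1 + (-32/63 : ℝ) * H2 + (27/28 : ℝ) * H3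
  have t112 : μ 1 1 2 + μ 1 2 1 + μ 2 1 1 = 0 := by linear_combination (31/18 : ℝ) * H0 + (-32/15 : ℝ) * H1 + (-32/15 : ℝ) * H2 + (-272/225 : ℝ) * H5 + (544/225 : ℝ) * H6 + (-27/50 : ℝ) * H8 + (1 : ℝ) * H9 + (1 : ℝ) * H11
  have t122 : μ 1 2 2 + μ 2 1 2 + μ 2 2 1 = 0 := by linear_combination (169/36 : ℝ) * H0 + (-1216/225 : ℝ) * H1 + (-64/1575 : ℝ) * H2 + (-513/700 : ℝ) * H3 + (-16/15 : ℝ) * H5 + (-16/15 : ℝ) * H6 + (2 : ℝ) * H9 + (2 : ℝ) * H10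
  have t222 : μ 2 2 2 = 0 := by linear_combination (-125/36 : ℝ) * H0 + (32/63 : ℝ) * H5 + (32/9 : ℝ) * H6 + (-27/28 : ℝ) * H8
  constructor
  · intro X
    simp only [Fin.sum_univ_three]
    linear_combination (X 0)^3 * t000 + (X 0)^2*(X 1) * t001 + (X 0)^2*(X 2) * t002
      + (X 0)*(X 1)^2 * t011 + (X 0)*(X 1)*(X 2) * t012 + (X 0)*(X 2)^2 * t022
      + (X 1)^3 * t111 + (X 1)^2*(X 2) * t112 + (X 1)*(X 2)^2 * t122 + (X 2)^3 * t222
  · clear h H0 H1 H2 H3 H4 H5 H6 H7 H8 H9 H10 H11 H12 H13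
    intro a b c
    rw [perm3_sum' (fun i j k => μ (![a, b, c] i) (![a, b, c] j) (![a, b, c] k))]
    fin_cases a <;> fin_cases b <;> fin_cases c <;>
      simp only [Matrix.cons_val_zero, Matrix.cons_val_one, Matrix.head_cons,
        Matrix.cons_val_two, Matrix.tail_cons, Fin.isValue, Fin.mk_zero,
        Fin.mk_one, fin3_mk_two] <;>
      linarith [t000, t001, t002, t011, t012, t022, t111, t112, t122, t222]
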